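/- Let M and N be positive integers with 1 < N < M, let p* be the largest prime factor of N, and let k* be the largest nonnegative integer such that N·p*^{k*} < M. Suppose σ(N)·p*^{k*} < 2·N·(p*−1)^{k*}. Then every positive integer N' < M of the form N' = N·q₁·q₂⋯q_k, where k ≥ 0 and each qᵢ is a prime with qᵢ ≥ p* (repetitions among the qᵢ allowed), is deficient, i.e., σ(N') < 2N'. -/

import Mathlib

/-- The sum of all positive divisors of `n`. -/
def sigma (n : ℕ) : ℕ := ∑ d ∈ n.divisors, d

/-- The largest prime factor of `n` (0 if `n` has no prime factor). -/
def maxPrimeFac (n : ℕ) : ℕ := n.primeFactors.sup id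

lemma sigma_mul_prime_le (n q : ℕ) (hq : q.Prime) :
    sigma (n * q) ≤ sigma n * (q + 1) := by
  rcases Nat.eq_zero_or_pos n with rfl | hn
  · simp [sigma]
  have hsub : (n * q).divisors ⊆ n.divisors ∪ n.divisors.image (· * q) := by
    intro d hd
    rw [Nat.mem_divisors] at hd
    obtain ⟨hdvd, hne⟩ := hd
    by_cases hqd : q ∣ d
    · obtain ⟨e, rfl⟩ := hqd
      have he : e ∣ n := by
        have h2 : q * e ∣ q * n := by rwa [mul_comm q n]
        exact (mul_dvd_mul_iff_left hq.pos.ne').mp h2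
      exact Finset.mem_union_right _ (Finset.mem_image.mpr
        ⟨e, Nat.mem_divisors.mpr ⟨he, hn.ne'⟩, by ring⟩)
    · have hco : Nat.Coprime d q := Nat.coprime_comm.mp (hq.coprime_iff_not_dvd.mpr hqd)
      exact Finset.mem_union_left _ (Nat.mem_divisors.mpr
        ⟨hco.dvd_of_dvd_mul_right hdvd, hn.ne'⟩)
  calc sigma (n * q) = ∑ d ∈ (n * q).divisors, d := rfl
    _ ≤ ∑ d ∈ n.divisors ∪ n.divisors.image (· * q), d :=
        Finset.sum_le_sum_of_subset hsub
    _ ≤ ∑ d ∈ n.divisors, d + ∑ d ∈ n.divisors.image (· * q), d := by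
        have := Finset.sum_union_inter (s₁ := n.divisors)
          (s₂ := n.divisors.image (· * q)) (f := id)
        simp only [id] at this
        omega
    _ ≤ sigma n + sigma n * q := by
        apply Nat.add_le_add_left
        rw [Finset.sum_image (fun a _ b _ h => Nat.eq_of_mul_eq_mul_right hq.pos h)]
        rw [sigma, Finset.sum_mul]
    _ = sigma n * (q + 1) := by ring

lemma pow_length_le_prod (p : ℕ) : ∀ L : List ℕ, (∀ q ∈ L, p ≤ q) →
    p ^ L.length ≤ L.prod := by
  intro L
  induction L with
  | nil => simp
  | cons q T ih =>
    intro h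
    simp only [List.prod_cons, List.length_cons, pow_succ]
    rw [mul_comm (p ^ T.length) p]
    exact Nat.mul_le_mul (h q (List.mem_cons_self))
      (ih fun r hr => h r (List.mem_cons_of_mem _ hr))

lemma key_induction (N p : ℕ) (hp2 : 2 ≤ p) : ∀ L : List ℕ,
    (∀ q ∈ L, q.Prime ∧ p ≤ q) →
    sigma (N * L.prod) * (p - 1) ^ L.length ≤ sigma N * p ^ L.length * L.prod := by
  intro L
  induction L with
  | nil => simp
  | cons q T ih =>
    intro h
    obtain ⟨hq, hpq⟩ := h q (List.mem_cons_self)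
    have hT := ih fun r hr => h r (List.mem_cons_of_mem _ hr)
    simp only [List.prod_cons, List.length_cons, pow_succ]
    have h1 : N * (q * T.prod) = (N * T.prod) * q := by ring
    rw [h1]
    calc sigma ((N * T.prod) * q) * ((p - 1) ^ T.length * (p - 1))
        ≤ (sigma (N * T.prod) * (q + 1)) * ((p - 1) ^ T.length * (p - 1)) :=
          Nat.mul_le_mul_right _ (sigma_mul_prime_le _ _ hq)
      _ = (sigma (N * T.prod) * (p - 1) ^ T.length) * ((q + 1) * (p - 1)) := by ring
      _ ≤ (sigma N * p ^ T.length * T.prod) * ((q + 1) * (p - 1)) :=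
          Nat.mul_le_mul_right _ hT
      _ ≤ (sigma N * p ^ T.length * T.prod) * (p * q) := by
          apply Nat.mul_le_mul_left
          obtain ⟨r, rfl⟩ : ∃ r, p = r + 1 := ⟨p - 1, by omega⟩
          have hrq : r ≤ q := by omega
          simp only [Nat.add_sub_cancel]
          nlinarith
      _ = sigma N * (p ^ T.length * p) * (q * T.prod) := by ring

/-- Pruning criterion: if `σ(N) * p*^k* < 2 * N * (p* - 1)^k*`, where `p*` is
the largest prime factor of `N` and `k*` is the largest integer with
`N * p*^k* < M`, then every `N' < M` obtained from `N` by multiplying primes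
`≥ p*` is deficient. -/
theorem barrier_prunes (M N : ℕ) (hN : 1 < N) (hNM : N < M)
    (p : ℕ) (hp : p = maxPrimeFac N)
    (k : ℕ) (hk : N * p ^ k < M) (hkmax : ∀ j : ℕ, N * p ^ j < M → j ≤ k)
    (hbar : sigma N * p ^ k < 2 * N * (p - 1) ^ k) :
    ∀ L : List ℕ, (∀ q ∈ L, q.Prime ∧ p ≤ q) → N * L.prod < M →
      sigma (N * L.prod) < 2 * (N * L.prod) := by
  have hp2 : 2 ≤ p := by
    obtain ⟨r, hrp, hrd⟩ := Nat.exists_prime_and_dvd (by omega : N ≠ 1)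
    have hr : r ∈ N.primeFactors :=
      Nat.mem_primeFactors.mpr ⟨hrp, hrd, by omega⟩
    have h2 := Finset.le_sup (f := id) hr
    simp only [id] at h2
    rw [hp, maxPrimeFac]
    exact le_trans hrp.two_le h2
  intro L hL hLM
  set P := L.prod with hP
  have hPpos : 0 < P := List.prod_pos fun q hq => (hL q hq).1.pos
  -- length of L is at most k
  have hlen : L.length ≤ k := by
    apply hkmax
    calc N * p ^ L.length ≤ N * P :=
          Nat.mul_le_mul_left _ (pow_length_le_prod p L fun q hq => (hL q hq).2)
      _ < M := hLM
  have hkey := key_induction N p hp2 L hL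
  -- strengthen to exponent k
  have hkey2 : sigma (N * P) * (p - 1) ^ k ≤ sigma N * p ^ k * P := by
    obtain ⟨m, hm⟩ : ∃ m, k = L.length + m := ⟨k - L.length, by omega⟩
    subst hm
    calc sigma (N * P) * (p - 1) ^ (L.length + m)
        = sigma (N * P) * (p - 1) ^ L.length * (p - 1) ^ m := by ring
      _ ≤ sigma N * p ^ L.length * P * (p - 1) ^ m :=
          Nat.mul_le_mul_right _ hkey
      _ ≤ sigma N * p ^ L.length * P * p ^ m := by
          apply Nat.mul_le_mul_left
          exact Nat.pow_le_pow_left (by omega) m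
      _ = sigma N * p ^ (L.length + m) * P := by ring
  -- combine with barrier
  have hfinal : sigma (N * P) * (p - 1) ^ k < 2 * (N * P) * (p - 1) ^ k := by
    calc sigma (N * P) * (p - 1) ^ k ≤ sigma N * p ^ k * P := hkey2
      _ < 2 * N * (p - 1) ^ k * P :=
          Nat.mul_lt_mul_of_lt_of_le hbar (le_refl P) hPpos
      _ = 2 * (N * P) * (p - 1) ^ k := by ring
  have hpow : 0 < (p - 1) ^ k := Nat.pow_pos (by omega)
  exact Nat.lt_of_mul_lt_mul_right hfinal
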